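/- In a DAG with single source and single sink, if ⟨s, e'⟩ and ⟨s, e⟩ both satisfy the reachability, matching and acyclicity conditions of a superbubble and ordD[e] = ordD[e'] + 1 in a topological ordering whose interval property holds, then e is the only child of e' and e' is the only parent of e; hence ⟨e', e⟩ is a superbubble. -/

import Mathlib

/-- `v` is reachable from `s` by a directed path whose internal vertices
(all vertices except the endpoints) avoid `avoid`. -/
def ReachWithout {V : Type*} (E : V → V → Prop) (avoid s v : V) : Prop :=
  s = v ∨ ∃ w, Relation.ReflTransGen (fun a b => E a b ∧ b ≠ avoid) s w ∧ E w v

/-- `t` is reachable from `v` by a directed path whose internal vertices avoid `avoid`. -/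
def CoReachWithout {V : Type*} (E : V → V → Prop) (avoid v t : V) : Prop :=
  v = t ∨ ∃ w, E v w ∧ Relation.ReflTransGen (fun a b => E a b ∧ a ≠ avoid) w t

/-- The subgraph induced by `U` is acyclic. -/
def AcyclicOn {V : Type*} (E : V → V → Prop) (U : Set V) : Prop :=
  ∀ v, ¬ Relation.TransGen (fun a b => E a b ∧ a ∈ U ∧ b ∈ U) v v

/-- The directed graph is acyclic. -/
def Acyclic {V : Type*} (E : V → V → Prop) : Prop :=
  ∀ v, ¬ Relation.TransGen E v v

/-- The reachability, matching and acyclicity conditions of a superbubble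
(Definition 1, without minimality). -/
def SBCore {V : Type*} (E : V → V → Prop) (s t : V) : Prop :=
  s ≠ t ∧ Relation.TransGen E s t ∧
  (∀ v, ReachWithout E t s v ↔ CoReachWithout E s v t) ∧
  AcyclicOn E {v | ReachWithout E t s v}

/-- `⟨s, t⟩` is a superbubble: reachability, matching, acyclicity and minimality. -/
def Superbubble {V : Type*} (E : V → V → Prop) (s t : V) : Prop :=
  SBCore E s t ∧ ∀ t', ReachWithout E t s t' → t' ≠ t → ¬ SBCore E s t'

/-- If ⟨s, e'⟩ and ⟨s, e⟩ both satisfy the reachability, matching and acyclicity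
conditions of a superbubble and ordD e = ordD e' + 1 in a topological ordering with the
interval property, then e is the only child of e' and e' is the only parent of e;
hence ⟨e', e⟩ is a superbubble. -/
theorem consecutive_exits_superbubble {V : Type*} [Fintype V] (E : V → V → Prop)
    (hA : Acyclic E)
    (hSource : ∃! r : V, ∀ u, ¬ E u r)
    (hSink : ∃! q : V, ∀ u, ¬ E q u)
    (ordD : V → ℕ) (hinj : Function.Injective ordD)
    (htopo : ∀ a b, E a b → ordD a < ordD b)
    (hInterval : ∀ a b : V, SBCore E a b →
      {v : V | ReachWithout E b a v} = {v : V | ordD a ≤ ordD v ∧ ordD v ≤ ordD b})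
    (s e e' : V)
    (h1 : SBCore E s e) (h2 : SBCore E s e')
    (ho1 : ordD s < ordD e') (hadj : ordD e = ordD e' + 1) :
    (∀ u, E e' u ↔ u = e) ∧ (∀ u, E u e ↔ u = e') ∧ Superbubble E e' e := by
  have hne' : e' ≠ e := fun h => by rw [h] at hadj; omega
  -- interval characterizations
  have hI1 : ∀ v, ReachWithout E e s v ↔ (ordD s ≤ ordD v ∧ ordD v ≤ ordD e) := by
    intro v
    have := Set.ext_iff.mp (hInterval s e h1) v
    simpa using this
  have hI2 : ∀ v, ReachWithout E e' s v ↔ (ordD s ≤ ordD v ∧ ordD v ≤ ordD e') := by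
    intro v
    have := Set.ext_iff.mp (hInterval s e' h2) v
    simpa using this
  -- monotonicity of ordD along restricted walks
  have hmono : ∀ (P : V → V → Prop) {a b : V},
      Relation.ReflTransGen (fun x y => E x y ∧ P x y) a b → ordD a ≤ ordD b := by
    intro P a b h
    induction h with
    | refl => exact le_refl _
    | tail _ hstep ih => exact ih.trans (le_of_lt (htopo _ _ hstep.1))
  -- extension lemma for ReachWithout
  have hext : ∀ (t w v : V), ReachWithout E t s w → w ≠ t → E w v →
      ReachWithout E t s v := by
    intro t w v hw hwt hwv
    rcases hw with heq | ⟨w', hrt, hw'⟩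
    · exact Or.inr ⟨w, heq ▸ Relation.ReflTransGen.refl, hwv⟩
    · exact Or.inr ⟨w, hrt.tail ⟨hw', hwt⟩, hwv⟩
  -- e' is in the interval of ⟨s, e⟩
  have he'mem : ReachWithout E e s e' := (hI1 e').mpr ⟨le_of_lt ho1, by omega⟩
  -- Step 1: every child of e' is e
  have child : ∀ u, E e' u → u = e := by
    intro u hu
    by_contra hne
    have : ReachWithout E e s u := hext e e' u he'mem hne' hu
    have h3 := ((hI1 u).mp this).2
    have h4 := htopo _ _ hu
    exact hne (hinj (by omega))
  -- Step 2: E e' e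
  have hedge : E e' e := by
    have := (h1.2.2.1 e').mp he'mem
    rcases this with h | ⟨w, hw, _⟩
    · exact absurd h hne'
    · rwa [child w hw] at hw
  -- Step 3: e is not reachable from s avoiding e'
  have hnot : ¬ ReachWithout E e' s e := by
    intro h
    have := (h2.2.2.1 e).mp h
    rcases this with h' | ⟨w, hw, hrt⟩
    · exact hne' h'.symm
    · have h5 := hmono _ hrt
      have h6 := htopo _ _ hw
      omega
  -- Step 4: every parent of e is e'
  have parent : ∀ u, E u e → u = e' := by
    intro u hu
    by_contra hne
    have hco : CoReachWithout E s u e := Or.inr ⟨e, hu, Relation.ReflTransGen.refl⟩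
    have hr : ReachWithout E e s u := (h1.2.2.1 u).mpr hco
    have h3 := (hI1 u).mp hr
    have h4 := htopo _ _ hu
    have hr' : ReachWithout E e' s u := (hI2 u).mpr ⟨h3.1, by omega⟩
    exact hnot (hext e' u e hr' hne hu)
  -- characterization of ReachWithout E e e'
  have hstuck : ∀ w, Relation.ReflTransGen (fun a b => E a b ∧ b ≠ e) e' w → w = e' := by
    intro w h
    rcases Relation.ReflTransGen.cases_head h with h' | ⟨c, hc, _⟩
    · exact h'.symm
    · exact absurd (child c hc.1) hc.2
  have hreach : ∀ v, ReachWithout E e e' v ↔ (v = e' ∨ v = e) := by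
    intro v
    constructor
    · rintro (h | ⟨w, hrt, hw⟩)
      · exact Or.inl h.symm
      · rw [hstuck w hrt] at hw
        exact Or.inr (child v hw)
    · rintro (rfl | rfl)
      · exact Or.inl rfl
      · exact Or.inr ⟨e', Relation.ReflTransGen.refl, hedge⟩
  have hstuck' : ∀ w, Relation.ReflTransGen (fun a b => E a b ∧ a ≠ e') w e → w = e := by
    intro w h
    rcases (Relation.ReflTransGen.cases_tail h) with h' | ⟨c, _, hc⟩
    · exact h'.symm
    · exact absurd (parent c hc.1) hc.2
  have hcoreach : ∀ v, CoReachWithout E e' v e ↔ (v = e' ∨ v = e) := by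
    intro v
    constructor
    · rintro (h | ⟨w, hw, hrt⟩)
      · exact Or.inr h
      · rw [hstuck' w hrt] at hw
        exact Or.inl (parent v hw)
    · rintro (rfl | rfl)
      · exact Or.inr ⟨e, hedge, Relation.ReflTransGen.refl⟩
      · exact Or.inl rfl
  have hcore : SBCore E e' e := by
    refine ⟨hne', Relation.TransGen.single hedge, ?_, ?_⟩
    · intro v
      rw [hreach v, hcoreach v]
    · intro v hcyc
      exact hA v (Relation.TransGen.mono (fun a b h => h.1) v v hcyc)
  refine ⟨fun u => ⟨child u, fun h => h ▸ hedge⟩,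
    fun u => ⟨parent u, fun h => h ▸ hedge⟩, hcore, ?_⟩
  intro t' ht' hte hSB
  rcases (hreach t').mp ht' with rfl | rfl
  · exact hSB.1 rfl
  · exact hte rfl
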